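/- arXiv:1509.00893 — 4 statements merged into one kernel-verified Lean document; each statement's English description precedes it below -/
import Mathlib

section
/- The map z ↦ ℂ·(z,1) is a bijection from the upper half plane ℍ onto the set of one-dimensional ℂ-subspaces L of ℂ² with the property that every nonzero vector (v₁,v₂) ∈ L satisfies Im(v₁·conj(v₂)) > 0. Moreover, for every z ∈ ℍ one has the internal direct sum decomposition ℂ² = ℂ·(z,1) ⊕ ℂ·(conj(z),1). -/
open Submodule Complex

lemma line_ne (z : ℂ) : ((z, 1) : ℂ × ℂ) ≠ 0 := by
  simp [Prod.ext_iff]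

/-- The map `z ↦ ℂ·(z,1)` is a bijection from the upper half plane onto the
set of one-dimensional `ℂ`-subspaces `L` of `ℂ²` such that every nonzero `(v₁, v₂) ∈ L`
satisfies `Im (v₁ * conj v₂) > 0`; moreover for `z ∈ ℍ` one has the internal direct sum
decomposition `ℂ² = ℂ·(z,1) ⊕ ℂ·(conj z, 1)`. -/
theorem statement0 :
    Set.BijOn (fun z : ℂ => Submodule.span ℂ {((z, 1) : ℂ × ℂ)})
      {z : ℂ | 0 < z.im}
      {L : Submodule ℂ (ℂ × ℂ) | Module.finrank ℂ L = 1 ∧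
        ∀ v ∈ L, v ≠ (0 : ℂ × ℂ) → 0 < (v.1 * (starRingEnd ℂ) v.2).im} ∧
    ∀ z : ℂ, 0 < z.im →
      IsCompl (Submodule.span ℂ {((z, 1) : ℂ × ℂ)})
        (Submodule.span ℂ {(((starRingEnd ℂ) z, 1) : ℂ × ℂ)}) := by
  constructor
  · refine ⟨?_, ?_, ?_⟩
    · intro z hz
      refine ⟨finrank_span_singleton (line_ne z), ?_⟩
      intro v hv hv0
      rw [mem_span_singleton] at hv
      obtain ⟨c, rfl⟩ := hv
      have hc : c ≠ 0 := by rintro rfl; simp at hv0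
      have h1 : ((c • ((z,1) : ℂ × ℂ)).1 * (starRingEnd ℂ) (c • ((z,1):ℂ × ℂ)).2)
          = (Complex.normSq c : ℂ) * z := by
        simp [Prod.smul_def, smul_eq_mul, map_mul]
        rw [mul_comm c z, mul_assoc, Complex.mul_conj]
        ring
      rw [h1]
      have hz' : 0 < z.im := hz
      have := Complex.normSq_pos.2 hc
      simp only [Complex.mul_im, Complex.ofReal_re, Complex.ofReal_im, zero_mul, add_zero]
      positivity
    · intro z hz w hw h
      have : ((w,1):ℂ × ℂ) ∈ span ℂ {((z,1):ℂ × ℂ)} := by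
        show ((w,1):ℂ × ℂ) ∈ (fun z : ℂ => span ℂ {((z,1):ℂ × ℂ)}) z
        rw [h]; exact mem_span_singleton_self _
      rw [mem_span_singleton] at this
      obtain ⟨c, hc⟩ := this
      rw [Prod.ext_iff] at hc
      obtain ⟨h1, h2⟩ := hc
      simp only [Prod.smul_fst, Prod.smul_snd, smul_eq_mul, mul_one] at h1 h2
      subst h2; simpa using h1
    · rintro L ⟨hfr, hpos⟩
      obtain ⟨v, hv0, hv⟩ := finrank_eq_one_iff'.mp hfr
      obtain ⟨⟨a, b⟩, hvL⟩ := v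
      have hvne : ((a, b) : ℂ × ℂ) ≠ 0 := fun h => hv0 (Subtype.ext h)
      have him := hpos (a, b) hvL hvne
      simp only at him
      have hb : b ≠ 0 := by
        rintro rfl; simp at him
      refine ⟨a / b, ?_, ?_⟩
      · show 0 < (a / b).im
        have heq : a / b = (((Complex.normSq b)⁻¹ : ℝ) : ℂ) * (a * (starRingEnd ℂ) b) := by
          rw [div_eq_mul_inv, Complex.inv_def]; push_cast; ring
        rw [heq]
        have hinv : 0 < (Complex.normSq b)⁻¹ := by
          have := Complex.normSq_pos.2 hb; positivity
        simp only [Complex.mul_im, Complex.ofReal_re, Complex.ofReal_im, zero_mul, add_zero]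
        positivity
      · show span ℂ {((a/b, 1) : ℂ × ℂ)} = L
        have key : ((a, b) : ℂ × ℂ) = b • ((a/b, 1) : ℂ × ℂ) := by
          simp [Prod.ext_iff, smul_eq_mul, mul_div_cancel₀ a hb]
        apply le_antisymm
        · rw [span_singleton_le_iff_mem]
          have : ((a/b,1) : ℂ × ℂ) = b⁻¹ • ((a,b) : ℂ × ℂ) := by
            rw [key, smul_smul, inv_mul_cancel₀ hb, one_smul]
          rw [this]
          exact L.smul_mem _ hvL
        · intro w hw
          obtain ⟨c, hc⟩ := hv ⟨w, hw⟩
          have : w = c • ((a,b) : ℂ × ℂ) := by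
            have := congrArg Subtype.val hc
            simpa using this.symm
          rw [this, key, smul_smul]
          exact smul_mem _ _ (mem_span_singleton_self _)
  · intro z hz
    have hzz : z - (starRingEnd ℂ) z ≠ 0 := by
      intro h
      rw [sub_eq_zero] at h
      have : z.im = -z.im := by
        conv_lhs => rw [h]
        exact Complex.conj_im z
      linarith
    constructor
    · rw [disjoint_def]
      intro x hx hx'
      rw [mem_span_singleton] at hx hx'
      obtain ⟨c, rfl⟩ := hx
      obtain ⟨d, hd⟩ := hx'
      rw [Prod.ext_iff] at hd
      simp only [Prod.smul_fst, Prod.smul_snd, smul_eq_mul, mul_one] at hd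
      obtain ⟨h1, h2⟩ := hd
      rw [h2] at h1
      have h3 : c * (z - (starRingEnd ℂ) z) = 0 := by rw [mul_sub, h1]; ring
      have hc0 : c = 0 := by
        rcases mul_eq_zero.mp h3 with h | h
        · exact h
        · exact absurd h hzz
      simp [hc0]
    · rw [codisjoint_iff, eq_top_iff]
      rintro ⟨x1, x2⟩ _
      set c : ℂ := (x1 - x2 * (starRingEnd ℂ) z) / (z - (starRingEnd ℂ) z) with hc
      refine mem_sup.mpr ⟨c • ((z,1):ℂ × ℂ), smul_mem _ _ (mem_span_singleton_self _),
        (x2 - c) • (((starRingEnd ℂ) z, 1):ℂ × ℂ), smul_mem _ _ (mem_span_singleton_self _), ?_⟩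
      rw [Prod.ext_iff]
      constructor
      · show c * z + (x2 - c) * (starRingEnd ℂ) z = x1
        have : c * (z - (starRingEnd ℂ) z) = x1 - x2 * (starRingEnd ℂ) z :=
          div_mul_cancel₀ _ hzz
        linear_combination this
      · show c * 1 + (x2 - c) * 1 = x2
        ring
end

section
/- Let E be a complex vector space and σ: E → E an ℝ-linear involution which is conjugate-linear, i.e. σ(σ(v)) = v and σ(c·v) = conj(c)·σ(v) for all c ∈ ℂ, v ∈ E. Let (W_{p,q})_{(p,q) ∈ ℤ×ℤ} be a family of complex subspaces of E such that E is the internal direct sum of the W_{p,q} and σ(W_{p,q}) = W_{q,p} for all p,q. For n ∈ ℤ set V_n = ⨁_{p+q=n} W_{p,q}, and for p ∈ ℤ set F^p = ⨁_{p'≥p, q ∈ ℤ} W_{p',q}. Then for all p,q ∈ ℤ one has W_{p,q} = V_{p+q} ∩ F^p ∩ σ(F^q). -/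
/-- Let `E` be a complex vector space and `σ : E → E` an ℝ-linear
(i.e. additive) conjugate-linear involution.  Let `(W_{p,q})` be a family of complex
subspaces of `E` forming an internal direct sum decomposition of `E` with
`σ(W_{p,q}) = W_{q,p}`.  With `V_n = ⨁_{p+q=n} W_{p,q}` and `F^p = ⨁_{p'≥p,q} W_{p',q}`,
one has `W_{p,q} = V_{p+q} ∩ F^p ∩ σ(F^q)` for all `p, q`. -/
theorem statement2 {E : Type*} [AddCommGroup E] [Module ℂ E]
    (σ : E → E)
    (hσ_add : ∀ v w : E, σ (v + w) = σ v + σ w)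
    (hσ_smul : ∀ (c : ℂ) (v : E), σ (c • v) = ((starRingEnd ℂ) c) • σ v)
    (hσ_inv : ∀ v : E, σ (σ v) = v)
    (W : ℤ × ℤ → Submodule ℂ E)
    (hint : DirectSum.IsInternal W)
    (hconj : ∀ p q : ℤ, σ '' (W (p, q) : Set E) = (W (q, p) : Set E)) :
    ∀ p q : ℤ,
      (W (p, q) : Set E) =
        ((⨆ pq : {w : ℤ × ℤ // w.1 + w.2 = p + q}, W pq.val : Submodule ℂ E) : Set E) ∩
          ((⨆ pq : {w : ℤ × ℤ // p ≤ w.1}, W pq.val : Submodule ℂ E) : Set E) ∩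
          σ '' ((⨆ pq : {w : ℤ × ℤ // q ≤ w.1}, W pq.val : Submodule ℂ E) : Set E) := by
  classical
  letI dec : DirectSum.Decomposition W := hint.chooseDecomposition
  have hσ0 : σ 0 = 0 := by
    have := hσ_add 0 0
    simpa using this.symm
  -- σ maps W(a,b) into W(b,a)
  have hσW : ∀ a b : ℤ, ∀ x ∈ W (a, b), σ x ∈ W (b, a) := by
    intro a b x hx
    have : σ x ∈ σ '' (W (a, b) : Set E) := ⟨x, hx, rfl⟩
    rwa [hconj a b] at this
  -- membership in a subtype-iSup forces support condition
  have hsupp : ∀ (P : ℤ × ℤ → Prop) (v : E),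
      v ∈ (⨆ pq : {w : ℤ × ℤ // P w}, W pq.val) →
      ∀ i : ℤ × ℤ, ¬ P i → (DirectSum.decompose W v i : E) = 0 := by
    intro P v hv
    refine Submodule.iSup_induction (x := v) (fun pq : {w : ℤ × ℤ // P w} => W pq.val) hv
      ?_ ?_ ?_
    · rintro ⟨j, hj⟩ x hx i hi
      have hij : j ≠ i := fun h => hi (h ▸ hj)
      exact DirectSum.decompose_of_mem_ne W hx hij
    · intro i _
      simp
    · intro x y hx hy i hi
      rw [DirectSum.decompose_add]
      have := hx i hi
      have := hy i hi
      simp only [DirectSum.add_apply, Submodule.coe_add, hx i hi, hy i hi, add_zero]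
  -- decompose commutes with σ up to swapping indices
  have hσdec : ∀ u : E, ∀ a b : ℤ,
      (DirectSum.decompose W (σ u) (a, b) : E) = σ (DirectSum.decompose W u (b, a) : E) := by
    intro u
    have hu : u ∈ ⨆ i, W i := by
      rw [hint.submodule_iSup_eq_top]; trivial
    refine Submodule.iSup_induction (x := u) W hu ?_ ?_ ?_
    · rintro ⟨c, d⟩ x hx a b
      have hσx : σ x ∈ W (d, c) := hσW c d x hx
      by_cases h : (a, b) = (d, c)
      · obtain ⟨rfl, rfl⟩ := Prod.mk.injEq .. ▸ h
        rw [DirectSum.decompose_of_mem_same W hσx,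
          DirectSum.decompose_of_mem_same W hx]
      · have h1 : (DirectSum.decompose W (σ x) (a, b) : E) = 0 :=
          DirectSum.decompose_of_mem_ne W hσx (Ne.symm h)
        have h2 : (DirectSum.decompose W x (b, a) : E) = 0 := by
          refine DirectSum.decompose_of_mem_ne W hx fun hcd => h ?_
          obtain ⟨h3, h4⟩ := Prod.mk.injEq .. ▸ hcd
          simp [h3, h4]
        rw [h1, h2, hσ0]
    · intro a b
      simp [hσ0]
    · intro x y hx hy a b
      rw [hσ_add, DirectSum.decompose_add, DirectSum.decompose_add]
      simp only [DirectSum.add_apply, Submodule.coe_add, hx a b, hy a b, hσ_add]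
  intro p q
  ext v
  constructor
  · intro hv
    refine ⟨⟨?_, ?_⟩, ?_⟩
    · exact Submodule.mem_iSup_of_mem (⟨(p, q), rfl⟩ : {w : ℤ × ℤ // w.1 + w.2 = p + q}) hv
    · exact Submodule.mem_iSup_of_mem (⟨(p, q), le_refl p⟩ : {w : ℤ × ℤ // p ≤ w.1}) hv
    · refine ⟨σ v, ?_, hσ_inv v⟩
      exact Submodule.mem_iSup_of_mem (⟨(q, p), le_refl q⟩ : {w : ℤ × ℤ // q ≤ w.1})
        (hσW p q v hv)
  · rintro ⟨⟨hV, hF⟩, u, hu, rfl⟩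
    set v := σ u with hv
    -- support conditions
    have h1 := hsupp (fun w => w.1 + w.2 = p + q) v hV
    have h2 := hsupp (fun w => p ≤ w.1) v hF
    have h3 : ∀ i : ℤ × ℤ, ¬ q ≤ i.2 → (DirectSum.decompose W v i : E) = 0 := by
      rintro ⟨a, b⟩ hb
      rw [hσdec u a b]
      rw [hsupp (fun w => q ≤ w.1) u hu (b, a) hb, hσ0]
    have hkey : ∀ i : ℤ × ℤ, i ≠ (p, q) → (DirectSum.decompose W v i : E) = 0 := by
      rintro ⟨a, b⟩ hi
      by_cases hab : a + b = p + q
      · by_cases ha : p ≤ a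
        · by_cases hb : q ≤ b
          · exfalso
            have : a = p := by omega
            have : b = q := by omega
            exact hi (by simp_all)
          · exact h3 (a, b) hb
        · exact h2 (a, b) ha
      · exact h1 (a, b) hab
    have := DirectSum.sum_support_decompose W v
    rw [← this]
    refine Submodule.sum_mem _ ?_
    intro i hi
    by_cases h : i = (p, q)
    · subst h; exact (DirectSum.decompose W v (p, q)).2
    · rw [hkey i h]; exact (W (p, q)).zero_mem
end

section
/- Let Γ be a subgroup of SL(2,ℂ) and let Γ' ≤ Γ be a subgroup of finite index. If the trace of every element of Γ' is an algebraic integer, then the trace of every element of Γ is an algebraic integer. -/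
open Polynomial in
lemma key_int (x y : ℂ) (hs : IsIntegral ℤ (x + y)) (hp : x * y = 1) :
    IsIntegral ℤ x := by
  set R := integralClosure ℤ ℂ
  have hx : x ∈ integralClosure R ℂ := by
    refine ⟨X ^ 2 - C (⟨x + y, hs⟩ : R) * X + 1, by monicity!, ?_⟩
    simp only [eval₂_add, eval₂_sub, eval₂_mul, eval₂_pow, eval₂_X, eval₂_C, eval₂_one]
    have : (algebraMap R ℂ) (⟨x + y, hs⟩ : R) = x + y := rfl
    rw [this]
    linear_combination -hp
  rw [integralClosure_idem] at hx
  obtain ⟨r, hr⟩ := Algebra.mem_bot.mp hx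
  rw [← hr]
  exact r.2

lemma sq_eq_two (M : Matrix (Fin 2) (Fin 2) ℂ) :
    M ^ 2 = M.trace • M - M.det • (1 : Matrix (Fin 2) (Fin 2) ℂ) := by
  ext i j
  fin_cases i <;> fin_cases j <;>
    simp [pow_two, Matrix.mul_apply, Fin.sum_univ_two, Matrix.trace_fin_two,
      Matrix.det_fin_two, Matrix.one_apply, Matrix.smul_apply] <;> ring

lemma trace_pow_eq (M : Matrix (Fin 2) (Fin 2) ℂ) (hdet : M.det = 1)
    (l m : ℂ) (hsum : l + m = M.trace) (hprod : l * m = 1) :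
    ∀ n : ℕ, (M ^ n).trace = l ^ n + m ^ n := by
  have hrec : ∀ k : ℕ, M ^ (k + 2) = M.trace • M ^ (k + 1) - M ^ k := by
    intro k
    have h2 := sq_eq_two M
    rw [hdet, one_smul] at h2
    calc M ^ (k + 2) = M ^ k * M ^ 2 := by rw [← pow_add]
    _ = M ^ k * (M.trace • M - 1) := by rw [h2]
    _ = M.trace • M ^ (k + 1) - M ^ k := by
        rw [mul_sub, mul_one, Matrix.mul_smul, ← pow_succ]
  intro n
  induction n using Nat.strong_induction_on with
  | _ n ih =>
    match n with
    | 0 => simp [Matrix.trace_one]; norm_num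
    | 1 => simp [← hsum]
    | (k + 2) =>
      rw [hrec k, Matrix.trace_sub, Matrix.trace_smul,
        ih (k+1) (by omega), ih k (by omega), ← hsum]
      have hl : l ^ (k + 2) = (l + m) * l ^ (k + 1) - (l * m) * l ^ k := by ring
      have hm : m ^ (k + 2) = (l + m) * m ^ (k + 1) - (l * m) * m ^ k := by ring
      rw [hl, hm, hprod]
      simp only [smul_eq_mul]
      ring

/-- Let `Γ` be a subgroup of `SL(2,ℂ)` and `Γ' ≤ Γ` a subgroup of finite
index.  If the trace of every element of `Γ'` is an algebraic integer, then the trace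
of every element of `Γ` is an algebraic integer. -/
theorem statement7 (Γ Γ' : Subgroup (Matrix.SpecialLinearGroup (Fin 2) ℂ))
    (hle : Γ' ≤ Γ) (hfin : Γ'.relIndex Γ ≠ 0)
    (h : ∀ γ ∈ Γ', IsIntegral ℤ (Matrix.trace (γ : Matrix (Fin 2) (Fin 2) ℂ))) :
    ∀ γ ∈ Γ, IsIntegral ℤ (Matrix.trace (γ : Matrix (Fin 2) (Fin 2) ℂ)) := by
  intro γ hγ
  obtain ⟨n, hn, -, hmem⟩ := Subgroup.exists_pow_mem_of_relIndex_ne_zero hfin hγ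
  set M : Matrix (Fin 2) (Fin 2) ℂ := (γ : Matrix (Fin 2) (Fin 2) ℂ) with hM
  set t : ℂ := M.trace with ht
  obtain ⟨l, hl⟩ := Complex.exists_root
    (f := Polynomial.X ^ 2 - Polynomial.C t * Polynomial.X + 1)
    (by
      have hdeg : (Polynomial.X ^ 2 - Polynomial.C t * Polynomial.X + 1 : Polynomial ℂ).degree = 2 := by
        compute_degree!
      rw [hdeg]; norm_num)
  have hl' : l ^ 2 - t * l + 1 = 0 := by
    simpa [Polynomial.IsRoot] using hl
  set m : ℂ := t - l with hm
  have hsum : l + m = t := by rw [hm]; ring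
  have hprod : l * m = 1 := by rw [hm]; linear_combination -hl'
  have hdet : M.det = 1 := γ.2
  have htr := trace_pow_eq M hdet l m hsum hprod
  have hInt : IsIntegral ℤ (l ^ n + m ^ n) := by
    have hh := h (γ ^ n) hmem.1
    rw [Matrix.SpecialLinearGroup.coe_pow] at hh
    rwa [htr n] at hh
  have hprodn : l ^ n * m ^ n = 1 := by rw [← mul_pow, hprod, one_pow]
  have hln : IsIntegral ℤ l := (key_int _ _ hInt hprodn).of_pow hn
  have hmn : IsIntegral ℤ m := by
    have : IsIntegral ℤ (m ^ n + l ^ n) := by rwa [add_comm] at hInt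
    exact (key_int _ _ this (by rw [mul_comm]; exact hprodn)).of_pow hn
  have : IsIntegral ℤ (l + m) := hln.add hmn
  rwa [hsum] at this
end

section
/- Let p be a prime number. Let Φ_p be the subgroup of SL(2,ℝ) generated by the set of matrices [[a,b],[c,d]] with a,b,c,d ∈ ℤ, ad − bc = 1 and p ∣ c, together with the single matrix [[0, −1/√p],[√p, 0]]. Then the subfield of ℝ generated over ℚ by the traces of all elements of Φ_p is exactly ℚ(√p). -/
/-- The group `SL(2,ℝ)`. -/
abbrev SL2R := Matrix.SpecialLinearGroup (Fin 2) ℝ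

/-- The preimage in `SL(2,ℝ)` of the Fricke group of level `p`: the subgroup generated
by the integral matrices `[[a,b],[c,d]]` of determinant one with `p ∣ c`, together with
the matrix `[[0, -1/√p],[√p, 0]]`. -/
def frickeGroup (p : ℕ) : Subgroup SL2R :=
  Subgroup.closure
    ({g : SL2R | ∃ a b c d : ℤ,
        a * d - b * c = 1 ∧ (p : ℤ) ∣ c ∧
        (g : Matrix (Fin 2) (Fin 2) ℝ) = !![(a : ℝ), (b : ℝ); (c : ℝ), (d : ℝ)]} ∪
      {g : SL2R | (g : Matrix (Fin 2) (Fin 2) ℝ) =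
        !![0, -(1 / Real.sqrt p); Real.sqrt p, 0]})

/-- For a prime `p`, the subfield of `ℝ` generated over `ℚ` by the traces
of all elements of the Fricke group of level `p` is exactly `ℚ(√p)`. -/
theorem statement9 (p : ℕ) (hp : p.Prime) :
    Subfield.closure
        {x : ℝ | ∃ g ∈ frickeGroup p, Matrix.trace (g : Matrix (Fin 2) (Fin 2) ℝ) = x} =
      Subfield.closure {Real.sqrt p} := by
  have hp0 : (0:ℝ) < p := by exact_mod_cast hp.pos
  have hsp : Real.sqrt p ≠ 0 := ne_of_gt (Real.sqrt_pos.mpr hp0)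
  set K := Subfield.closure {Real.sqrt p} with hK
  have hspK : Real.sqrt p ∈ K := Subfield.subset_closure rfl
  apply le_antisymm
  · rw [Subfield.closure_le]
    rintro x ⟨g, hg, rfl⟩
    have key : ∀ g ∈ frickeGroup p, ∀ i j, (g : Matrix (Fin 2) (Fin 2) ℝ) i j ∈ K := by
      intro g hg
      induction hg using Subgroup.closure_induction with
      | mem g hgmem =>
        rcases hgmem with ⟨a, b, c, d, -, -, hmat⟩ | hmat
        · intro i j
          fin_cases i <;> fin_cases j <;>
            simp only [hmat, Matrix.cons_val', Matrix.cons_val_zero, Matrix.cons_val_one,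
              Matrix.head_cons, Matrix.head_fin_const, Matrix.empty_val',
              Matrix.cons_val_fin_one] <;>
            exact Subfield.intCast_mem K _
        · simp only [Set.mem_setOf_eq] at hmat
          intro i j
          fin_cases i <;> fin_cases j <;>
            simp only [hmat, Matrix.cons_val', Matrix.cons_val_zero, Matrix.cons_val_one,
              Matrix.head_cons, Matrix.head_fin_const, Matrix.empty_val',
              Matrix.cons_val_fin_one]
          · exact K.zero_mem
          · rw [one_div]; exact K.neg_mem (K.inv_mem hspK)
          · exact hspK
          · exact K.zero_mem
      | one =>
        intro i j
        simp only [Matrix.SpecialLinearGroup.coe_one, Matrix.one_apply]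
        split <;> simp [K.one_mem, K.zero_mem]
      | mul a b ha hb iha ihb =>
        intro i j
        rw [Matrix.SpecialLinearGroup.coe_mul, Matrix.mul_apply]
        exact Subfield.sum_mem K fun k _ => K.mul_mem (iha i k) (ihb k j)
      | inv a ha ih =>
        intro i j
        rw [Matrix.SpecialLinearGroup.coe_inv, Matrix.adjugate_fin_two]
        fin_cases i <;> fin_cases j <;>
          simp only [Matrix.cons_val', Matrix.cons_val_zero, Matrix.cons_val_one,
            Matrix.head_cons, Matrix.head_fin_const, Matrix.empty_val',
            Matrix.cons_val_fin_one]
        · exact ih 1 1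
        · exact K.neg_mem (ih 0 1)
        · exact K.neg_mem (ih 1 0)
        · exact ih 0 0
    rw [Matrix.trace_fin_two]
    exact K.add_mem (key g hg 0 0) (key g hg 1 1)
  · rw [Subfield.closure_le]
    intro x hx
    rw [Set.mem_singleton_iff] at hx; subst hx
    have hdetS : (!![0, -(1 / Real.sqrt p); Real.sqrt p, 0] : Matrix (Fin 2) (Fin 2) ℝ).det = 1 := by
      rw [Matrix.det_fin_two_of]; field_simp; norm_num
    have hdetT : (!![(1:ℝ), 1; 0, 1] : Matrix (Fin 2) (Fin 2) ℝ).det = 1 := by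
      rw [Matrix.det_fin_two_of]; ring
    set S : SL2R := ⟨_, hdetS⟩ with hS
    set T : SL2R := ⟨_, hdetT⟩ with hT
    have hSmem : S ∈ frickeGroup p := Subgroup.subset_closure (Or.inr rfl)
    have hTmem : T ∈ frickeGroup p :=
      Subgroup.subset_closure (Or.inl ⟨1, 1, 0, 1, by ring, ⟨0, by ring⟩, by norm_num [hT]⟩)
    refine Subfield.subset_closure ⟨S * T, mul_mem hSmem hTmem, ?_⟩
    have : ((S * T : SL2R) : Matrix (Fin 2) (Fin 2) ℝ) =
        !![0, -(1 / Real.sqrt p); Real.sqrt p, 0] * !![(1:ℝ), 1; 0, 1] := rfl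
    rw [this, Matrix.mul_fin_two, Matrix.trace_fin_two]
    norm_num
end
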